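/- On ℝ³ with coordinates (y,z,p), let s₁ = τ₁ + y²τ₂, s₂ = τ₂, s₃ = τ₃ − 2y τ₂, where τ₁ = dy + y dz, τ₂ = −(dp − p dz), τ₃ = −dz. Set A = −(s₁ + s₂), B = s₁ − s₂, C = −s₃. Then (A, B, C) satisfies the same structure equations as the triple (σ₁, σ₂, σ₃), namely dA = −B∧C, dB = −A∧C, dC = A∧B at every point of ℝ³. (This is the Lie-algebra isomorphism {σ₁,σ₂,σ₃} ≅ {−(s₁+s₂), s₁−s₂, −s₃} identifying the two rolling Pfaffian systems.) -/

import Mathlib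

/-!
STATEMENT 5: On ℝ³ with coordinates (y,z,p), set A = −(s₁ + s₂), B = s₁ − s₂,
C = −s₃ (with s₁, s₂, s₃ built from τ₁ = dy + y dz, τ₂ = −(dp − p dz), τ₃ = −dz).
Then dA = −B∧C, dB = −A∧C, dC = A∧B: (A,B,C) satisfies the same structure
equations as (σ₁,σ₂,σ₃).
-/

noncomputable section

/-- the coordinate differentials dy, dz, dp on ℝ³ with coordinates (y,z,p) -/
def dc (i : Fin 3) : (Fin 3 → ℝ) →L[ℝ] ℝ := ContinuousLinearMap.proj i

/-- exterior derivative of a 1-form -/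
def extd {n : ℕ} (ω : (Fin n → ℝ) → ((Fin n → ℝ) →L[ℝ] ℝ)) :
    (Fin n → ℝ) → (Fin n → ℝ) → (Fin n → ℝ) → ℝ :=
  fun a u v => fderiv ℝ (fun x => ω x v) a u - fderiv ℝ (fun x => ω x u) a v

/-- wedge product of two 1-forms -/
def wedge {n : ℕ} (ω η : (Fin n → ℝ) → ((Fin n → ℝ) →L[ℝ] ℝ)) :
    (Fin n → ℝ) → (Fin n → ℝ) → (Fin n → ℝ) → ℝ :=
  fun a u v => ω a u * η a v - ω a v * η a u

/-- τ₁ = dy + y dz -/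
def τ₁ : (Fin 3 → ℝ) → ((Fin 3 → ℝ) →L[ℝ] ℝ) := fun a => dc 0 + a 0 • dc 1

/-- τ₂ = −(dp − p dz) -/
def τ₂ : (Fin 3 → ℝ) → ((Fin 3 → ℝ) →L[ℝ] ℝ) := fun a => -(dc 2 - a 2 • dc 1)

/-- τ₃ = −dz -/
def τ₃ : (Fin 3 → ℝ) → ((Fin 3 → ℝ) →L[ℝ] ℝ) := fun _ => -dc 1

/-- s₁ = τ₁ + y²τ₂ -/
def s₁ : (Fin 3 → ℝ) → ((Fin 3 → ℝ) →L[ℝ] ℝ) := fun a => τ₁ a + (a 0)^2 • τ₂ a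

/-- s₂ = τ₂ -/
def s₂ : (Fin 3 → ℝ) → ((Fin 3 → ℝ) →L[ℝ] ℝ) := τ₂

/-- s₃ = τ₃ − 2y τ₂ -/
def s₃ : (Fin 3 → ℝ) → ((Fin 3 → ℝ) →L[ℝ] ℝ) := fun a => τ₃ a - (2 * a 0) • τ₂ a

/-- A = −(s₁ + s₂) -/
def A : (Fin 3 → ℝ) → ((Fin 3 → ℝ) →L[ℝ] ℝ) := fun a => -(s₁ a + s₂ a)

/-- B = s₁ − s₂ -/
def B : (Fin 3 → ℝ) → ((Fin 3 → ℝ) →L[ℝ] ℝ) := fun a => s₁ a - s₂ a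

/-- C = −s₃ -/
def C : (Fin 3 → ℝ) → ((Fin 3 → ℝ) →L[ℝ] ℝ) := fun a => -s₃ a

lemma A_apply (x v : Fin 3 → ℝ) :
    A x v = (-(v 0) + v 2) + x 0 * (-(v 1)) + (x 0 * x 0) * (v 2) + x 2 * (-(v 1))
      + (x 0 * x 0) * x 2 * (-(v 1)) + x 0 * x 2 * 0 := by
  simp only [A, s₁, s₂, τ₁, τ₂, dc, ContinuousLinearMap.neg_apply,
    ContinuousLinearMap.add_apply, ContinuousLinearMap.sub_apply,
    ContinuousLinearMap.smul_apply, ContinuousLinearMap.proj_apply, smul_eq_mul]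
  ring

lemma B_apply (x v : Fin 3 → ℝ) :
    B x v = (v 0 + v 2) + x 0 * (v 1) + (x 0 * x 0) * (-(v 2)) + x 2 * (-(v 1))
      + (x 0 * x 0) * x 2 * (v 1) + x 0 * x 2 * 0 := by
  simp only [B, s₁, s₂, τ₁, τ₂, dc, ContinuousLinearMap.neg_apply,
    ContinuousLinearMap.add_apply, ContinuousLinearMap.sub_apply,
    ContinuousLinearMap.smul_apply, ContinuousLinearMap.proj_apply, smul_eq_mul]
  ring

lemma C_apply (x v : Fin 3 → ℝ) :
    C x v = (v 1) + x 0 * (-(2 * v 2)) + (x 0 * x 0) * 0 + x 2 * 0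
      + (x 0 * x 0) * x 2 * 0 + x 0 * x 2 * (2 * v 1) := by
  simp only [C, s₃, τ₂, τ₃, dc, ContinuousLinearMap.neg_apply,
    ContinuousLinearMap.add_apply, ContinuousLinearMap.sub_apply,
    ContinuousLinearMap.smul_apply, ContinuousLinearMap.proj_apply, smul_eq_mul]
  ring

lemma master (c₀ c₁ c₂ c₃ c₄ c₅ : ℝ) (a u : Fin 3 → ℝ) :
    fderiv ℝ (fun x : Fin 3 → ℝ =>
        c₀ + x 0 * c₁ + (x 0 * x 0) * c₂ + x 2 * c₃ + (x 0 * x 0) * x 2 * c₄ + x 0 * x 2 * c₅) a u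
      = u 0 * c₁ + 2 * a 0 * u 0 * c₂ + u 2 * c₃
        + (2 * a 0 * u 0 * a 2 + a 0 ^ 2 * u 2) * c₄ + (u 0 * a 2 + a 0 * u 2) * c₅ := by
  have h0 : HasFDerivAt (fun x : Fin 3 → ℝ => x 0) (dc 0) a :=
    (dc 0).hasFDerivAt
  have h2 : HasFDerivAt (fun x : Fin 3 → ℝ => x 2) (dc 2) a :=
    (dc 2).hasFDerivAt
  have hsq := h0.mul h0
  have H := (((((hasFDerivAt_const c₀ a).add (h0.mul_const c₁)).add
      (hsq.mul_const c₂)).add (h2.mul_const c₃)).add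
      ((hsq.mul h2).mul_const c₄)).add ((h0.mul h2).mul_const c₅)
  erw [H.fderiv]
  simp only [dc, ContinuousLinearMap.add_apply, ContinuousLinearMap.smul_apply,
    ContinuousLinearMap.zero_apply, ContinuousLinearMap.proj_apply, smul_eq_mul,
    nsmul_eq_mul, Nat.cast_ofNat, Pi.mul_apply]
  ring

theorem sl2_isomorphic_coframe_structure_equations :
    ∀ (a u v : Fin 3 → ℝ),
      extd A a u v = -(wedge B C a u v) ∧
      extd B a u v = -(wedge A C a u v) ∧
      extd C a u v = wedge A B a u v := by
  intro a u v
  refine ⟨?_, ?_, ?_⟩ <;>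
  · simp only [extd, wedge, A_apply, B_apply, C_apply, master]
    ring

end
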